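/- Let G be a graph, let (T,X) be a tree decomposition of G, and let P ⊆ T be a path with ends i₀ and j₀ such that i₀ is a nonredundant end of P. Then the sets R_i for i ∈ V(P) together with the sets S_i for i ∈ V(P) are pairwise disjoint and their union is V(G); moreover, R_i ≠ ∅ for every i ∈ V(P). -/

import Mathlib

open scoped Classical

namespace MinBisection

noncomputable section

variable {V ι : Type*}

/-- The number of edges of `G` with one endpoint in `B` and the other outside of `B`,
i.e., the width `e_G(B, W)` of the cut `(B, W)` where `W` is the complement of `B`. -/
def cutWidth (G : SimpleGraph V) (B : Finset V) : ℕ :=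
  Nat.card {e : Sym2 V // ∃ x y, G.Adj x y ∧ x ∈ B ∧ y ∉ B ∧ e = s(x, y)}

/-- The number of edges of `G` whose endpoints lie in two different parts of the
partition `(B, W, Z)` of the vertex set. -/
def cutWidth3 (G : SimpleGraph V) (B W Z : Finset V) : ℕ :=
  Nat.card {e : Sym2 V // ∃ x y, G.Adj x y ∧ e = s(x, y) ∧
    ¬ ((x ∈ B ∧ y ∈ B) ∨ (x ∈ W ∧ y ∈ W) ∨ (x ∈ Z ∧ y ∈ Z))}

/-- `(B, Bᶜ)` is a bisection: the sizes of the two parts differ by at most one. -/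
def IsBisection [Fintype V] (B : Finset V) : Prop :=
  B.card ≤ Bᶜ.card + 1 ∧ Bᶜ.card ≤ B.card + 1

/-- The minimum bisection width `MinBis(G)`. -/
def minBis (G : SimpleGraph V) [Fintype V] : ℕ :=
  sInf {k | ∃ B : Finset V, IsBisection B ∧ cutWidth G B = k}

/-- The maximum degree `Δ(G)`. -/
def maxDeg (G : SimpleGraph V) [Fintype V] : ℕ :=
  Finset.univ.sup fun v => Nat.card {u // G.Adj v u}

/-- The number of vertices on a longest path in `G`. -/
def longestPathCard (G : SimpleGraph V) : ℕ :=
  sSup {k | ∃ (u v : V) (p : G.Walk u v), p.IsPath ∧ k = p.support.length}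

/-- The relative diameter `diam*` of a connected graph: the number of vertices on a
longest path divided by the number of vertices. -/
def diamStar (G : SimpleGraph V) [Fintype V] : ℝ :=
  (longestPathCard G : ℝ) / (Fintype.card V : ℝ)

/-- The number of vertices on a longest path contained in the connected component `c`. -/
def compLongestPathCard (G : SimpleGraph V) (c : G.ConnectedComponent) : ℕ :=
  sSup {k | ∃ (u v : V) (p : G.Walk u v), p.IsPath ∧ G.connectedComponentMk u = c ∧
    k = p.support.length}

/-- The relative diameter `diam*` of a forest: the sum over all connected components of the
number of vertices on a longest path in the component, divided by the number of vertices. -/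
def forestDiamStar (G : SimpleGraph V) [Fintype V] : ℝ :=
  letI : Fintype G.ConnectedComponent := Fintype.ofFinite _
  (∑ c : G.ConnectedComponent, (compLongestPathCard G c : ℝ)) / (Fintype.card V : ℝ)

/-- `(T, X)` is a tree decomposition of `G`. -/
structure IsTreeDecomp (G : SimpleGraph V) (T : SimpleGraph ι) (X : ι → Finset V) : Prop where
  isTree : T.IsTree
  mem_cluster : ∀ v : V, ∃ i, v ∈ X i
  edge_cluster : ∀ ⦃u v : V⦄, G.Adj u v → ∃ i, u ∈ X i ∧ v ∈ X i
  inter_subset : ∀ ⦃i j : ι⦄ (p : T.Walk i j), p.IsPath → ∀ h ∈ p.support, X i ∩ X j ⊆ X h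

/-- The weight `w(P, X)` of a path `p` of the tree `T` with respect to the clusters `X`:
the cardinality of the union of the clusters along the path. -/
def walkWeight (X : ι → Finset V) {T : SimpleGraph ι} {i j : ι} (p : T.Walk i j) : ℕ :=
  (p.support.toFinset.biUnion X).card

/-- The relative weight `r(T, X)` of a heaviest path in the tree decomposition `(T, X)`. -/
def rTD [Fintype V] (T : SimpleGraph ι) (X : ι → Finset V) : ℝ :=
  (↑(sSup {w : ℕ | ∃ (i j : ι) (p : T.Walk i j), p.IsPath ∧ w = walkWeight X p}) : ℝ) /
    (Fintype.card V : ℝ)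

/-- The path `p` is nonredundant: one of its two ends `i` is a nonredundant end, i.e.,
`X i ≠ ∅` and no cluster along the path contains the previous one when traversed from `i`. -/
def NonredundantPath (X : ι → Finset V) {T : SimpleGraph ι} {i j : ι} (p : T.Walk i j) : Prop :=
  (X i ≠ ∅ ∧ List.Chain' (fun a b => ¬ X b ⊆ X a) p.support) ∨
  (X j ≠ ∅ ∧ List.Chain' (fun a b => ¬ X b ⊆ X a) p.reverse.support)

/-- `R_i`: the set of vertices whose path node (first node along `p`, traversed from the
end `i₀`, whose cluster contains the vertex) is `i`. -/
def Rset (X : ι → Finset V) {T : SimpleGraph ι} {i₀ j₀ : ι} (p : T.Walk i₀ j₀) (i : ι) :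
    Set V :=
  {x | ∃ (k : ℕ) (hk : k < p.support.length), p.support.get ⟨k, hk⟩ = i ∧ x ∈ X i ∧
    ∀ (l : ℕ) (hl : l < k), x ∉ X (p.support.get ⟨l, hl.trans hk⟩)}

/-- `S_i`: the union of the clusters over the component `T_i` of `T - E(P)` containing `i`,
minus `R = ⋃_{h ∈ V(P)} X^h`. -/
def Sset (X : ι → Finset V) {T : SimpleGraph ι} {i₀ j₀ : ι} (p : T.Walk i₀ j₀) (i : ι) :
    Set V :=
  {x | (∃ j, (∃ q : T.Walk i j, ∀ e ∈ q.edges, e ∉ p.edges) ∧ x ∈ X j) ∧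
    ∀ h ∈ p.support, x ∉ X h}

end

end MinBisection
section Helpers
open SimpleGraph

private lemma slice_aux {ι : Type*} {T : SimpleGraph ι} {i j : ι} (p : T.Walk i j) :
    ∀ (l k : ℕ), l ≤ k → k < p.support.length →
    ∃ (u w : ι) (q : T.Walk u w),
      q.support = (p.support.drop l).take (k - l + 1) ∧ ∀ e ∈ q.edges, e ∈ p.edges := by
  induction p with
  | @nil u =>
    intro l k hlk hk
    simp only [Walk.support_nil, List.length_singleton] at hk
    interval_cases k
    interval_cases l
    exact ⟨u, u, .nil, by simp, by simp⟩
  | @cons u v' j h p' ih =>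
    intro l k hlk hk
    match l, k with
    | 0, 0 =>
      exact ⟨u, u, .nil, by simp [List.take_cons], by simp⟩
    | 0, k + 1 =>
      have hk' : k < p'.support.length := by
        simpa [Walk.support_cons] using hk
      obtain ⟨u', w', q', hsup, hedq⟩ := ih 0 k (Nat.zero_le _) hk'
      have hu' : u' = v' := by
        have h1 := q'.support_eq_cons
        rw [hsup] at h1
        have h2 := p'.support_eq_cons
        rw [h2] at h1
        simp only [List.drop_zero, List.take_cons] at h1
        exact (List.cons.injEq _ _ _ _ ▸ h1).1.symm
      subst hu'
      refine ⟨u, w', .cons h q', ?_, ?_⟩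
      · rw [Walk.support_cons, hsup]
        simp only [List.drop_zero, List.take_cons]
        rfl
      · intro e he
        rw [Walk.edges_cons, List.mem_cons] at he
        rcases he with rfl | he
        · simp
        · exact List.mem_cons_of_mem _ (hedq e he)
    | l + 1, k + 1 =>
      have hk' : k < p'.support.length := by
        simpa [Walk.support_cons] using hk
      obtain ⟨u', w', q', hsup, hedq⟩ := ih l k (Nat.le_of_succ_le_succ hlk) hk'
      refine ⟨u', w', q', ?_, fun e he => List.mem_cons_of_mem _ (hedq e he)⟩
      rw [hsup]
      simp [Nat.succ_sub_succ]

private lemma slice_lem {ι : Type*} {T : SimpleGraph ι} {i j : ι} (p : T.Walk i j)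
    (hp : p.IsPath) (l k : ℕ) (hlk : l ≤ k) (hk : k < p.support.length) :
    ∃ q : T.Walk (p.support.get ⟨l, lt_of_le_of_lt hlk hk⟩) (p.support.get ⟨k, hk⟩),
      q.IsPath ∧ (∀ e ∈ q.edges, e ∈ p.edges) ∧
      ∀ m (hm : m < p.support.length), l ≤ m → m ≤ k →
        p.support.get ⟨m, hm⟩ ∈ q.support := by
  obtain ⟨u, w, q, hsup, hed⟩ := slice_aux p l k hlk hk
  set s := p.support with hs
  have hslicelen : ((s.drop l).take (k - l + 1)).length = k - l + 1 := by
    rw [List.length_take, List.length_drop]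
    omega
  have hqlen : q.support.length = k - l + 1 := by rw [hsup, hslicelen]
  have hget : ∀ m (hm : m < s.length), l ≤ m → m ≤ k →
      s.get ⟨m, hm⟩ ∈ q.support := by
    intro m hm hlm hmk
    have hidx : m - l < q.support.length := by omega
    have : q.support.get ⟨m - l, hidx⟩ = s.get ⟨m, hm⟩ := by
      simp only [List.get_eq_getElem, hsup]
      rw [List.getElem_take, List.getElem_drop]
      congr 1
      omega
    rw [← this]
    exact List.get_mem _ _
  have hu : u = s.get ⟨l, lt_of_le_of_lt hlk hk⟩ := by
    have h0 : q.support[0]'(by omega) = u := by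
      rw [List.getElem_zero]
      exact q.head_support
    simp only [hsup, List.getElem_take, List.getElem_drop] at h0
    rw [← h0]
    simp
  have hw : w = s.get ⟨k, hk⟩ := by
    have h0 : q.support[q.support.length - 1]'(by omega) = w := by
      rw [← List.getLast_eq_getElem]
      exact q.getLast_support
    simp only [hsup, hslicelen, List.getElem_take, List.getElem_drop] at h0
    rw [← h0]
    simp only [List.get_eq_getElem]
    congr 1
    omega
  have hpath : q.IsPath := by
    rw [SimpleGraph.Walk.isPath_def, hsup]
    exact ((List.take_sublist _ _).trans (List.drop_sublist _ _)).nodup hp.support_nodup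
  subst hu hw
  exact ⟨q, hpath, hed, hget⟩

private lemma edge_not_in_of_support {ι : Type*} {T : SimpleGraph ι} {i₀ j₀ u w : ι}
    {p : T.Walk i₀ j₀} {r : T.Walk u w} (hdisj : ∀ t ∈ r.support, t ∉ p.support) :
    ∀ e ∈ r.edges, e ∉ p.edges := by
  intro e her hep
  induction e with
  | h x y =>
    exact hdisj x (r.fst_mem_support_of_mem_edges her) (p.fst_mem_support_of_mem_edges hep)

private lemma reach_good {ι : Type*} {T : SimpleGraph ι} {i₀ j₀ : ι} (p : T.Walk i₀ j₀) :
    ∀ (n : ℕ) {s a : ι} (r : T.Walk s a), r.length ≤ n → s ∈ p.support →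
      ∃ i ∈ p.support, ∃ q : T.Walk i a, ∀ e ∈ q.edges, e ∉ p.edges := by
  intro n
  induction n with
  | zero =>
    intro s a r hr hs
    cases r with
    | nil => exact ⟨s, hs, .nil, by simp⟩
    | cons h r' => simp at hr
  | succ n ih =>
    intro s a r hr hs
    classical
    cases r with
    | nil => exact ⟨s, hs, .nil, by simp⟩
    | @cons _ v' _ h r' =>
      by_cases hmem : ∃ t ∈ r'.support, t ∈ p.support
      · obtain ⟨t, ht, htp⟩ := hmem
        refine ih (r'.dropUntil t ht) ?_ htp
        refine le_trans (SimpleGraph.Walk.length_dropUntil_le r' ht) ?_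
        have : r'.length + 1 ≤ n + 1 := hr
        omega
      · push_neg at hmem
        refine ⟨s, hs, .cons h r', ?_⟩
        intro e he hep
        rw [SimpleGraph.Walk.edges_cons, List.mem_cons] at he
        rcases he with rfl | he
        · exact hmem v' r'.start_mem_support (p.snd_mem_support_of_mem_edges hep)
        · exact edge_not_in_of_support (fun t ht => hmem t ht) e he hep

private lemma sset_contra {V ι : Type*} {T : SimpleGraph ι} (X : ι → Finset V)
    (hT : T.IsTree)
    (hsub : ∀ ⦃a b : ι⦄ (r : T.Walk a b), r.IsPath → ∀ h ∈ r.support, X a ∩ X b ⊆ X h)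
    {i₀ j₀ : ι} {p : T.Walk i₀ j₀} {i j a b : ι}
    (qp : T.Walk i j) (hqpP : qp.IsPath) (hqpe : ∀ e ∈ qp.edges, e ∈ p.edges) (hij : i ≠ j)
    (qi : T.Walk i a) (hqi : ∀ e ∈ qi.edges, e ∉ p.edges)
    (qj : T.Walk j b) (hqj : ∀ e ∈ qj.edges, e ∉ p.edges)
    {x : V} (hxa : x ∈ X a) (hxb : x ∈ X b)
    (hxs : ∀ h ∈ p.support, x ∉ X h) : False := by
  classical
  obtain ⟨r, hrP, -⟩ := hT.existsUnique_path a b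
  have hrd : ∀ t ∈ r.support, t ∉ p.support := by
    intro t ht htp
    exact hxs t htp (hsub r hrP t ht (Finset.mem_inter.mpr ⟨hxa, hxb⟩))
  have hre := edge_not_in_of_support hrd
  have hWe : ∀ e ∈ (qi.append (r.append qj.reverse)).edges, e ∉ p.edges := by
    intro e he
    simp only [Walk.edges_append, List.mem_append, Walk.edges_reverse,
      List.mem_reverse] at he
    intro hep
    rcases he with he | he | he
    · exact hqi e he hep
    · exact hre e he hep
    · exact hqj e he hep
  have hEq : qp = (qi.append (r.append qj.reverse)).bypass :=
    (hT.existsUnique_path i j).unique hqpP (qi.append (r.append qj.reverse)).bypass_isPath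
  cases qp with
  | nil => exact hij rfl
  | @cons _ v' _ hadj qp' =>
    have he0 : s(i, v') ∈ (Walk.cons hadj qp').edges := by simp
    have h1 : s(i, v') ∈ p.edges := hqpe _ he0
    rw [hEq] at he0
    exact hWe _ ((qi.append (r.append qj.reverse)).edges_bypass_subset he0) h1

private lemma convex_lem {V ι : Type*} (X : ι → Finset V) {T : SimpleGraph ι} {i₀ j₀ : ι}
    (p : T.Walk i₀ j₀) (hp : p.IsPath)
    (hsub : ∀ ⦃a b : ι⦄ (r : T.Walk a b), r.IsPath → ∀ h ∈ r.support, X a ∩ X b ⊆ X h)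
    {x : V} {l m k : ℕ} (hlm : l ≤ m) (hmk : m ≤ k) (hk : k < p.support.length)
    (hxl : x ∈ X (p.support.get ⟨l, by omega⟩)) (hxk : x ∈ X (p.support.get ⟨k, hk⟩)) :
    x ∈ X (p.support.get ⟨m, by omega⟩) := by
  obtain ⟨q, hqP, -, hmem⟩ := slice_lem p hp l k (hlm.trans hmk) hk
  exact hsub q hqP _ (hmem m (by omega) hlm hmk) (Finset.mem_inter.mpr ⟨hxl, hxk⟩)

end Helpers

/-- Let `(T, X)` be a tree decomposition of `G` and `P ⊆ T` a path with a
nonredundant end `i₀`. Then the sets `R_i` and the sets `S_i` for `i ∈ V(P)` are pairwise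
disjoint, their union is `V(G)`, and `R_i ≠ ∅` for every `i ∈ V(P)`. -/

theorem MinBisection.partition_Rset_Sset {V ι : Type*} [Fintype V] [Fintype ι]
    (G : SimpleGraph V) (T : SimpleGraph ι) (X : ι → Finset V)
    (hTD : IsTreeDecomp G T X) {i₀ j₀ : ι} (p : T.Walk i₀ j₀) (hp : p.IsPath)
    (hne : X i₀ ≠ ∅) (hnr : List.Chain' (fun a b => ¬ X b ⊆ X a) p.support) :
    (∀ i ∈ p.support, ∀ j ∈ p.support, i ≠ j → Disjoint (Rset X p i) (Rset X p j)) ∧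
    (∀ i ∈ p.support, ∀ j ∈ p.support, i ≠ j → Disjoint (Sset X p i) (Sset X p j)) ∧
    (∀ i ∈ p.support, ∀ j ∈ p.support, Disjoint (Rset X p i) (Sset X p j)) ∧
    (⋃ i ∈ p.support, Rset X p i ∪ Sset X p i) = Set.univ ∧
    (∀ i ∈ p.support, (Rset X p i).Nonempty) := by
  classical
  refine ⟨?_, ?_, ?_, ?_, ?_⟩
  · -- R pairwise disjoint
    intro i hi j hj hij
    rw [Set.disjoint_left]
    rintro x ⟨k, hk, hki, hxi, hmin⟩ ⟨k', hk', hk'j, hxj, hmin'⟩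
    rcases lt_trichotomy k k' with h | h | h
    · exact hmin' k h (hki ▸ hxi)
    · subst h
      exact hij (hki.symm.trans hk'j)
    · exact hmin k' h (hk'j ▸ hxj)
  · -- S pairwise disjoint
    intro i hi j hj hij
    rw [Set.disjoint_left]
    rintro x ⟨⟨a, ⟨qi, hqi⟩, hxa⟩, hxs⟩ ⟨⟨b, ⟨qj, hqj⟩, hxb⟩, hxs'⟩
    obtain ⟨ka, hka⟩ := List.mem_iff_get.mp hi
    obtain ⟨kb, hkb⟩ := List.mem_iff_get.mp hj
    subst hka hkb
    rcases le_or_gt ka.1 kb.1 with h | h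
    · obtain ⟨qp, hqpP, hqpe, -⟩ := slice_lem p hp ka.1 kb.1 h kb.2
      exact sset_contra X hTD.isTree hTD.inter_subset qp hqpP hqpe hij qi hqi qj hqj
        hxa hxb hxs
    · obtain ⟨qp, hqpP, hqpe, -⟩ := slice_lem p hp kb.1 ka.1 h.le ka.2
      have hij' : p.support.get ⟨ka.1, ka.2⟩ ≠ p.support.get ⟨kb.1, kb.2⟩ := hij
      refine sset_contra X hTD.isTree hTD.inter_subset qp.reverse hqpP.reverse ?_ hij'
        qi hqi qj hqj hxa hxb hxs
      intro e he
      rw [SimpleGraph.Walk.edges_reverse, List.mem_reverse] at he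
      exact hqpe e he
  · -- R vs S disjoint
    intro i hi j hj
    rw [Set.disjoint_left]
    rintro x ⟨k, hk, hki, hxi, -⟩ ⟨-, hxs⟩
    exact hxs i hi hxi
  · -- union
    ext v
    simp only [Set.mem_iUnion, Set.mem_univ, iff_true]
    by_cases hc : ∃ h ∈ p.support, v ∈ X h
    · have hidx : ∃ k, ∃ hk : k < p.support.length, v ∈ X (p.support.get ⟨k, hk⟩) := by
        obtain ⟨h, hh, hv⟩ := hc
        obtain ⟨kh, hkh⟩ := List.mem_iff_get.mp hh
        exact ⟨kh.1, kh.2, by rw [show (⟨kh.1, kh.2⟩ : Fin _) = kh from rfl, hkh]; exact hv⟩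
      obtain ⟨hk, hvk⟩ := Nat.find_spec hidx
      refine ⟨p.support.get ⟨Nat.find hidx, hk⟩, ⟨List.get_mem _ _, Or.inl
        ⟨Nat.find hidx, hk, rfl, hvk, ?_⟩⟩⟩
      intro l hl hvl
      exact Nat.find_min hidx hl ⟨hl.trans hk, hvl⟩
    · push_neg at hc
      obtain ⟨a, hva⟩ := hTD.mem_cluster v
      obtain ⟨r⟩ := hTD.isTree.isConnected.preconnected i₀ a
      obtain ⟨i, hi, q, hq⟩ := reach_good p r.length r le_rfl p.start_mem_support
      exact ⟨i, hi, Or.inr ⟨⟨a, ⟨q, hq⟩, hva⟩, hc⟩⟩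
  · -- R nonempty
    intro i hi
    obtain ⟨⟨kv, hlt⟩, hk⟩ := List.mem_iff_get.mp hi
    subst hk
    match kv, hlt with
    | 0, hlt =>
      have h00 : p.support.get ⟨0, hlt⟩ = i₀ := by
        rw [List.get_eq_getElem, List.getElem_zero]
        exact p.head_support
      obtain ⟨x, hx⟩ := Finset.nonempty_iff_ne_empty.mpr (fun hE => hne (h00 ▸ hE))
      exact ⟨x, 0, hlt, rfl, hx, fun l hl => absurd hl (Nat.not_lt_zero l)⟩
    | k' + 1, hlt =>
      have hch := List.isChain_iff_getElem.mp hnr k' (by omega)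
      obtain ⟨x, hx, hx'⟩ := Finset.not_subset.mp hch
      refine ⟨x, k' + 1, hlt, rfl, hx, ?_⟩
      intro l hl hxl
      exact hx' (convex_lem X p hp hTD.inter_subset (m := k')
        (by omega : l ≤ k') (Nat.le_succ k') hlt hxl hx)
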